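/- For every feasible caching vector U (i.e., U i > 0 for all i and ∑ i, U i = V), the total weighted number of external memory calls satisfies ∑ i, N i * W i / U i ≥ (∑ i, Real.sqrt (N i * W i))^2 / V. -/
import Mathlib

/-- Theorem 1 (lower bound part): for every feasible caching vector `U`,
the total weighted number of external memory calls `F₁(U) = ∑ i, N i * W i / U i`
is at least `(∑ i, √(N i * W i))² / V`. -/
theorem caching_F1_lower_bound (H : ℕ) (hH : 0 < H)
    (W N : Fin H → ℝ) (hW : ∀ i, 0 < W i) (hN : ∀ i, 0 < N i)
    (V : ℝ) (hV : 0 < V)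
    (U : Fin H → ℝ) (hU : ∀ i, 0 < U i) (hsum : ∑ i, U i = V) :
    ∑ i, N i * W i / U i ≥ (∑ i, Real.sqrt (N i * W i)) ^ 2 / V := by
  have key := Finset.sq_sum_div_le_sum_sq_div Finset.univ
    (fun i => Real.sqrt (N i * W i)) (g := U) (fun i _ => hU i)
  rw [hsum] at key
  calc (∑ i, Real.sqrt (N i * W i)) ^ 2 / V
      ≤ ∑ i, Real.sqrt (N i * W i) ^ 2 / U i := key
    _ = ∑ i, N i * W i / U i := by
        refine Finset.sum_congr rfl fun i _ => ?_
        rw [Real.sq_sqrt (mul_nonneg (hN i).le (hW i).le)]
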